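/- Let γ > 0 and α > 0 be real numbers, and for each integer N ≥ 1 define b_S(N) = 1/( 2(γ/N + α) + (γ/N)(N−1) ) and b_U(N) = 1/( 2(γ/N + α) + (2γ/N)(N−1) ). Then b_S(N)/b_U(N) converges, as N → ∞, to 2(γ+α)/(γ+2α), and 2(γ+α)/(γ+2α) > 1. -/

import Mathlib

open Filter

/-- Corollary 1, item 1: the ratio of selfish to altruistic expected
consumption constants tends to `2(γ+α)/(γ+2α) > 1`. -/
theorem stmt_6 (γ α : ℝ) (hγ : 0 < γ) (hα : 0 < α)
    (bS bU : ℕ → ℝ)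
    (hbS : ∀ N : ℕ, 1 ≤ N →
      bS N = 1 / (2 * (γ / N + α) + (γ / N) * ((N : ℝ) - 1)))
    (hbU : ∀ N : ℕ, 1 ≤ N →
      bU N = 1 / (2 * (γ / N + α) + (2 * γ / N) * ((N : ℝ) - 1))) :
    Tendsto (fun N => bS N / bU N) atTop (nhds (2 * (γ + α) / (γ + 2 * α)))
    ∧ 1 < 2 * (γ + α) / (γ + 2 * α) := by
  have hden : 0 < γ + 2 * α := by linarith
  constructor
  · have h0 : Tendsto (fun N : ℕ => γ / N) atTop (nhds 0) :=
      tendsto_const_nhds.div_atTop tendsto_natCast_atTop_atTop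
    have hlim : Tendsto (fun N : ℕ => (2 * γ + 2 * α) / (γ + 2 * α + γ / N)) atTop
        (nhds (2 * (γ + α) / (γ + 2 * α))) := by
      have h1 : Tendsto (fun N : ℕ => γ + 2 * α + γ / N) atTop (nhds (γ + 2 * α + 0)) :=
        tendsto_const_nhds.add h0
      have h2 := (tendsto_const_nhds : Tendsto (fun _ : ℕ => 2 * γ + 2 * α) atTop (nhds (2 * γ + 2 * α))).div h1 (by linarith : γ + 2 * α + 0 ≠ 0)
      convert h2 using 2
      · simp only [Pi.div_apply]
      · ring
    apply hlim.congr'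
    filter_upwards [eventually_ge_atTop 1] with N hN
    have hN0 : (N : ℝ) ≠ 0 := by
      have : (1 : ℝ) ≤ N := by exact_mod_cast hN
      linarith
    have hA : 2 * (γ / N + α) + (γ / N) * ((N : ℝ) - 1) = γ + 2 * α + γ / N := by
      field_simp; ring
    have hB : 2 * (γ / N + α) + (2 * γ / N) * ((N : ℝ) - 1) = 2 * γ + 2 * α := by
      field_simp; ring
    have hApos : 0 < γ + 2 * α + γ / N := by
      have : 0 < γ / N := by positivity
      linarith
    rw [hbS N hN, hbU N hN, hA, hB, div_div_div_comm, div_self (one_ne_zero), one_div_div]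
  · rw [lt_div_iff₀ hden]; linarith
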